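/- Let V be a finite type and let E be a finite set of ordered pairs of elements of V forming a rooted binary directed tree: there is exactly one vertex of in-degree 0, every other vertex has in-degree exactly 1, every vertex has out-degree 0 or 2, and the underlying undirected simple graph (with u adjacent to w iff (u,w) ∈ E or (w,u) ∈ E) is connected and acyclic. Let a and c be two distinct vertices of out-degree 0 (leaves), and let P be the vertex set of the unique path between a and c in the underlying undirected tree. Then the number of directed edges (v, w) ∈ E with v ∈ P \ {a, c} and w ∉ P equals |P| − 3. -/

import Mathlib

open SimpleGraph

private lemma adj_start_mem_edges_aux {V : Type*} [DecidableEq V] {G : SimpleGraph V}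
    (hA : G.IsAcyclic) {u w v : V} (q : G.Walk u w) (hq : q.IsPath)
    (hv : v ∈ q.support) (hadj : G.Adj u v) : s(u, v) ∈ q.edges := by
  have hq' : (q.takeUntil v hv).IsPath := hq.takeUntil hv
  have h2 : (Walk.cons hadj Walk.nil).IsPath := by
    simp [Walk.cons_isPath_iff, hadj.ne]
  have heq := hA.path_unique ⟨q.takeUntil v hv, hq'⟩ ⟨Walk.cons hadj Walk.nil, h2⟩
  have heq' : q.takeUntil v hv = Walk.cons hadj Walk.nil := congrArg Subtype.val heq
  have he : (q.takeUntil v hv).edges = [s(u,v)] := by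
    rw [heq']
    simp
  exact q.edges_takeUntil_subset hv (he ▸ List.mem_cons_self)

private lemma chord_mem_edges_aux {V : Type*} [DecidableEq V] {G : SimpleGraph V}
    (hA : G.IsAcyclic) {a c u v : V} (p : G.Walk a c) (hp : p.IsPath)
    (hu : u ∈ p.support) (hv : v ∈ p.support) (hadj : G.Adj u v) :
    s(u, v) ∈ p.edges := by
  rw [← p.take_spec hu, Walk.mem_support_append_iff] at hv
  rcases hv with hv | hv
  · have hv' : v ∈ (p.takeUntil u hu).reverse.support := by
      rw [Walk.support_reverse, List.mem_reverse]; exact hv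
    have h := adj_start_mem_edges_aux hA _ ((hp.takeUntil hu).reverse) hv' hadj
    rw [Walk.edges_reverse, List.mem_reverse] at h
    exact p.edges_takeUntil_subset hu h
  · exact p.edges_dropUntil_subset hu
      (adj_start_mem_edges_aux hA _ (hp.dropUntil hu) hv hadj)

/-- In a rooted binary directed tree (a finite set `E` of ordered pairs over a
finite vertex type `V`, with exactly one vertex of in-degree `0`, all other
vertices of in-degree `1`, every vertex of out-degree `0` or `2`, and whose
underlying undirected simple graph is connected and acyclic, i.e. a tree), for
two distinct leaves `a` and `c` with `P` the vertex set of the unique path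
between them in the underlying undirected tree, the number of directed edges
`(v, w) ∈ E` with `v ∈ P \ {a, c}` and `w ∉ P` equals `|P| - 3`. -/
theorem card_pendant_edges {V : Type*} [Fintype V] [DecidableEq V]
    (E : Finset (V × V))
    (hroot : ∃! r : V, (E.filter (fun e => e.2 = r)).card = 0)
    (hin : ∀ v : V, (E.filter (fun e => e.2 = v)).card ≠ 0 →
      (E.filter (fun e => e.2 = v)).card = 1)
    (hout : ∀ v : V, (E.filter (fun e => e.1 = v)).card = 0 ∨
      (E.filter (fun e => e.1 = v)).card = 2)
    (G : SimpleGraph V) (hG : G = SimpleGraph.fromRel (fun u w => (u, w) ∈ E))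
    (hT : G.IsTree)
    (a c : V) (hac : a ≠ c)
    (ha : (E.filter (fun e => e.1 = a)).card = 0)
    (hc : (E.filter (fun e => e.1 = c)).card = 0)
    (p : G.Walk a c) (hp : p.IsPath)
    (P : Finset V) (hP : P = p.support.toFinset) :
    (E.filter (fun e => e.1 ∈ P ∧ e.1 ≠ a ∧ e.1 ≠ c ∧ e.2 ∉ P)).card
      = P.card - 3 := by
  classical
  -- adjacency characterization
  have hadj : ∀ u w : V, G.Adj u w ↔ u ≠ w ∧ ((u, w) ∈ E ∨ (w, u) ∈ E) := by
    intro u w; rw [hG]; exact SimpleGraph.fromRel_adj _ u w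
  -- out-degree nonzero from membership
  have houtne : ∀ e ∈ E, (E.filter (fun f => f.1 = e.1)).card ≠ 0 := by
    intro e he
    exact Finset.card_ne_zero_of_mem (Finset.mem_filter.mpr ⟨he, rfl⟩)
  -- in-degree at most one
  have hindeg : ∀ v : V, (E.filter (fun e => e.2 = v)).card ≤ 1 := by
    intro v
    by_cases h : (E.filter (fun e => e.2 = v)).card = 0
    · omega
    · exact le_of_eq (hin v h)
  -- |E| ≤ |V| - 1
  obtain ⟨r, hr, -⟩ := hroot
  have hEcard : E.card + 1 ≤ Fintype.card V := by
    have h1 : E.card = ∑ v : V, (E.filter (fun e => e.2 = v)).card :=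
      Finset.card_eq_sum_card_fiberwise (fun e _ => Finset.mem_univ e.2)
    have h2 : ∑ v ∈ Finset.univ.erase r, (E.filter (fun e => e.2 = v)).card
        + (E.filter (fun e => e.2 = r)).card = ∑ v : V, (E.filter (fun e => e.2 = v)).card :=
      Finset.sum_erase_add _ _ (Finset.mem_univ r)
    have h3 : ∑ v ∈ Finset.univ.erase r, (E.filter (fun e => e.2 = v)).card
        ≤ (Finset.univ.erase r).card • 1 :=
      Finset.sum_le_card_nsmul _ _ _ (fun v _ => hindeg v)
    have h4 : (Finset.univ.erase r).card = Fintype.card V - 1 := by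
      rw [Finset.card_erase_of_mem (Finset.mem_univ r), Finset.card_univ]
    have h5 : 1 ≤ Fintype.card V := Fintype.card_pos_iff.mpr ⟨r⟩
    simp only [smul_eq_mul, mul_one] at h3
    omega
  -- edge finset of G as image
  have hEcardV : G.edgeFinset.card + 1 = Fintype.card V := hT.card_edgeFinset
  set σ : V × V → Sym2 V := fun e => s(e.1, e.2) with hσ
  set E' : Finset (V × V) := E.filter (fun e => e.1 ≠ e.2) with hE'
  have himg : E'.image σ = G.edgeFinset := by
    ext x
    induction x using Sym2.ind with
    | _ u w =>
      simp only [Finset.mem_image, SimpleGraph.mem_edgeFinset, SimpleGraph.mem_edgeSet]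
      constructor
      · rintro ⟨e, he, hex⟩
        obtain ⟨he, hne⟩ := Finset.mem_filter.mp he
        have hAe : G.Adj e.1 e.2 := (hadj e.1 e.2).mpr ⟨hne, Or.inl he⟩
        have hex' : s(e.1, e.2) = s(u, w) := hex
        rcases Sym2.eq_iff.mp hex' with ⟨h1, h2⟩ | ⟨h1, h2⟩
        · exact h1 ▸ h2 ▸ hAe
        · exact h1 ▸ h2 ▸ hAe.symm
      · intro hA
        rcases (hadj u w).mp hA with ⟨hne, h | h⟩
        · exact ⟨(u, w), Finset.mem_filter.mpr ⟨h, hne⟩, rfl⟩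
        · exact ⟨(w, u), Finset.mem_filter.mpr ⟨h, fun h' => hne h'.symm⟩, Sym2.eq_swap⟩
  -- cards force E' = E and injectivity
  have hE'sub : E' ⊆ E := Finset.filter_subset _ _
  have hE'le : E'.card ≤ E.card := Finset.card_le_card hE'sub
  have himgle : (E'.image σ).card ≤ E'.card := Finset.card_image_le
  have himgcard : (E'.image σ).card = G.edgeFinset.card := by rw [himg]
  have hEE' : E' = E := Finset.eq_of_subset_of_card_le hE'sub (by omega)
  have hinjE' : Set.InjOn σ (E' : Set (V × V)) :=
    Finset.card_image_iff.mp (by omega)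
  have hinjE : Set.InjOn σ (E : Set (V × V)) := by rw [← hEE']; exact hinjE'
  have hloop : ∀ e ∈ E, e.1 ≠ e.2 := by
    intro e he
    have : e ∈ E' := hEE' ▸ he
    exact (Finset.mem_filter.mp this).2
  have hsym : ∀ u w : V, (u, w) ∈ E → (w, u) ∈ E → False := by
    intro u w h1 h2
    have hne : u ≠ w := hloop (u, w) h1
    have : (u, w) = (w, u) := hinjE h1 h2 (Sym2.eq_swap)
    exact hne (congrArg Prod.fst this)
  -- path support facts
  have hnodup : p.support.Nodup := hp.support_nodup
  have hPmem : ∀ v : V, v ∈ P ↔ v ∈ p.support := by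
    intro v; rw [hP, List.mem_toFinset]
  have hPcard : P.card = p.length + 1 := by
    rw [hP, List.toFinset_card_of_nodup hnodup, Walk.length_support]
  -- length at least 2
  have hL : 2 ≤ p.length := by
    obtain ⟨b, hab, q, hpe⟩ := Walk.exists_eq_cons_of_ne hac p
    rcases (hadj a b).mp hab with ⟨hne, h | h⟩
    · exact absurd ha (houtne (a, b) h)
    · have hbc : b ≠ c := by
        rintro rfl
        exact absurd hc (houtne (b, a) h)
      have hq : q.length ≠ 0 := fun h0 => hbc (Walk.eq_of_length_eq_zero h0)
      have : p.length = q.length + 1 := by rw [hpe]; simp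
      omega
  -- internal vertices have out-degree 2
  have hdeg2 : ∀ v : V, v ∈ P → v ≠ a → v ≠ c →
      (E.filter (fun e => e.1 = v)).card = 2 := by
    intro v hvP hva hvc
    have hv : v ∈ p.support := (hPmem v).mp hvP
    rcases hout v with h0 | h2
    swap
    · exact h2
    exfalso
    -- find two neighbors of v on the path
    set q1 := p.takeUntil v hv with hq1
    set q2 := p.dropUntil v hv with hq2
    obtain ⟨u₁, hvu₁, r₁, hr₁⟩ := Walk.exists_eq_cons_of_ne hva q1.reverse
    obtain ⟨u₂, hvu₂, r₂, hr₂⟩ := Walk.exists_eq_cons_of_ne hvc q2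
    have hu₁mem : u₁ ∈ q1.support := by
      have : u₁ ∈ q1.reverse.support := by
        rw [hr₁]; simp [Walk.support_cons]
      rwa [Walk.support_reverse, List.mem_reverse] at this
    have hu₂mem : u₂ ∈ q2.support.tail := by
      rw [hr₂]; simp [Walk.support_cons]
    have hsupp : p.support = q1.support ++ q2.support.tail := by
      conv_lhs => rw [← p.take_spec hv]
      rw [Walk.support_append]
    have hdisj : u₁ ≠ u₂ := by
      have hnd : (q1.support ++ q2.support.tail).Nodup := hsupp ▸ hnodup
      intro h
      exact (List.disjoint_of_nodup_append hnd) hu₁mem (h ▸ hu₂mem)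
    -- both edges point into v
    have hin₁ : (u₁, v) ∈ E := by
      rcases (hadj v u₁).mp hvu₁ with ⟨-, h | h⟩
      · exact absurd h0 (houtne (v, u₁) h)
      · exact h
    have hin₂ : (u₂, v) ∈ E := by
      rcases (hadj v u₂).mp hvu₂ with ⟨-, h | h⟩
      · exact absurd h0 (houtne (v, u₂) h)
      · exact h
    have : 1 < (E.filter (fun e => e.2 = v)).card := by
      rw [Finset.one_lt_card]
      exact ⟨(u₁, v), Finset.mem_filter.mpr ⟨hin₁, rfl⟩,
             (u₂, v), Finset.mem_filter.mpr ⟨hin₂, rfl⟩,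
             fun h => hdisj (congrArg Prod.fst h)⟩
    have := hindeg v
    omega
  -- count all edges out of internal vertices
  set I : Finset V := (P.erase a).erase c with hI
  have haP : a ∈ P := (hPmem a).mpr p.start_mem_support
  have hcP : c ∈ P := (hPmem c).mpr p.end_mem_support
  have hIcard : I.card = p.length - 1 := by
    rw [hI, Finset.card_erase_of_mem (Finset.mem_erase.mpr ⟨Ne.symm hac, hcP⟩),
        Finset.card_erase_of_mem haP, hPcard]
    omega
  have hImem : ∀ v : V, v ∈ I ↔ v ∈ P ∧ v ≠ a ∧ v ≠ c := by
    intro v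
    rw [hI, Finset.mem_erase, Finset.mem_erase]
    tauto
  set B : Finset (V × V) := E.filter (fun e => e.1 ∈ P ∧ e.1 ≠ a ∧ e.1 ≠ c) with hB
  have hBcard : B.card = 2 * (p.length - 1) := by
    have hfib : B.card = ∑ v ∈ I, (B.filter (fun e => e.1 = v)).card := by
      apply Finset.card_eq_sum_card_fiberwise
      intro e he
      obtain ⟨-, h1, h2, h3⟩ := Finset.mem_filter.mp he
      exact (hImem e.1).mpr ⟨h1, h2, h3⟩
    have hfib2 : ∀ v ∈ I, (B.filter (fun e => e.1 = v)).card = 2 := by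
      intro v hvI
      obtain ⟨hvP, hva, hvc⟩ := (hImem v).mp hvI
      have : B.filter (fun e => e.1 = v) = E.filter (fun e => e.1 = v) := by
        ext e
        constructor
        · intro h
          obtain ⟨hBmem, hev⟩ := Finset.mem_filter.mp h
          obtain ⟨heE, -⟩ := Finset.mem_filter.mp (hB ▸ hBmem)
          exact Finset.mem_filter.mpr ⟨heE, hev⟩
        · intro h
          obtain ⟨heE, hev⟩ := Finset.mem_filter.mp h
          refine Finset.mem_filter.mpr ⟨hB ▸ Finset.mem_filter.mpr
            ⟨heE, ?_, ?_, ?_⟩, hev⟩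
          · rw [hev]; exact hvP
          · rw [hev]; exact hva
          · rw [hev]; exact hvc
      rw [this]
      exact hdeg2 v hvP hva hvc
    rw [hfib, Finset.sum_congr rfl hfib2, Finset.sum_const, hIcard, smul_eq_mul,
        Nat.mul_comm]
  -- count path edges among them
  set Tset : Finset (V × V) := E.filter (fun e => e.1 ∈ P ∧ e.1 ≠ a ∧ e.1 ≠ c ∧ e.2 ∈ P)
    with hTset
  have hTimg : Tset.image σ = p.edges.toFinset := by
    ext x
    constructor
    · intro hx
      obtain ⟨e, he, hex⟩ := Finset.mem_image.mp hx
      obtain ⟨heE, h1, -, -, h4⟩ := Finset.mem_filter.mp he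
      have hadje : G.Adj e.1 e.2 := (hadj e.1 e.2).mpr ⟨hloop e heE, Or.inl heE⟩
      have := chord_mem_edges_aux hT.IsAcyclic p hp ((hPmem e.1).mp h1)
        ((hPmem e.2).mp h4) hadje
      rw [List.mem_toFinset, ← hex]
      exact this
    · intro hx
      rw [List.mem_toFinset] at hx
      induction x using Sym2.ind with
      | _ u w =>
        have hadjuw : G.Adj u w := p.adj_of_mem_edges hx
        have huS : u ∈ p.support := p.fst_mem_support_of_mem_edges hx
        have hwS : w ∈ p.support := p.snd_mem_support_of_mem_edges hx
        rcases ((hadj u w).mp hadjuw).2 with h | h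
        · refine Finset.mem_image.mpr ⟨(u, w), Finset.mem_filter.mpr
            ⟨h, (hPmem u).mpr huS, ?_, ?_, (hPmem w).mpr hwS⟩, rfl⟩
          · rintro rfl; exact absurd ha (houtne (u, w) h)
          · rintro rfl; exact absurd hc (houtne (u, w) h)
        · refine Finset.mem_image.mpr ⟨(w, u), Finset.mem_filter.mpr
            ⟨h, (hPmem w).mpr hwS, ?_, ?_, (hPmem u).mpr huS⟩, Sym2.eq_swap⟩
          · rintro rfl; exact absurd ha (houtne (w, u) h)
          · rintro rfl; exact absurd hc (houtne (w, u) h)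
  have hTcard : Tset.card = p.length := by
    have h1 : (Tset.image σ).card = Tset.card :=
      Finset.card_image_of_injOn (hinjE.mono (by
        intro e he
        exact Finset.mem_coe.mpr (Finset.filter_subset _ _ (Finset.mem_coe.mp he))))
    rw [← h1, hTimg, List.toFinset_card_of_nodup hp.isTrail.edges_nodup,
        Walk.length_edges]
  -- split B by whether head is in P
  have hsplit : (B.filter (fun e => e.2 ∈ P)).card
      + (B.filter (fun e => ¬ e.2 ∈ P)).card = B.card :=
    Finset.card_filter_add_card_filter_not _
  have hBT : B.filter (fun e => e.2 ∈ P) = Tset := by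
    rw [hB, hTset, Finset.filter_filter]
    apply Finset.filter_congr
    intro e _
    tauto
  have hBS : B.filter (fun e => ¬ e.2 ∈ P)
      = E.filter (fun e => e.1 ∈ P ∧ e.1 ≠ a ∧ e.1 ≠ c ∧ e.2 ∉ P) := by
    rw [hB, Finset.filter_filter]
    apply Finset.filter_congr
    intro e _
    tauto
  rw [← hBS]
  rw [hBT] at hsplit
  rw [hPcard]
  omega
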